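/- Let d ∈ {2,3}, ρ > 0, h > 0, a > 0, ε > 0 with ε²a² < h, and let v, H ∈ ℝ^d with ε²|v|² < 1; set Γ := (1 − ε²|v|²)^{−1/2} and |b|² := ε²Γ⁻²|H|² + ε⁴(v·H)². Then the symmetric d×d matrix 𝒜₀ − ε⁴(ρa²/Γ) v⊗v is positive definite, where 𝒜₀ := (ρhΓ + ε²Γ⁻¹|H|²)(I_d − ε²v⊗v) − ε²Γ⁻¹|b|² v⊗v − ε²Γ⁻¹ H⊗H + ε⁴Γ⁻¹(v·H)(H⊗v + v⊗H). -/

import Mathlib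

open Matrix

/-- The Lorentz factor `Γ = (1 − ε²|v|²)^{−1/2}`. -/
noncomputable def lorentz (d : ℕ) (ε : ℝ) (v : Fin d → ℝ) : ℝ :=
  (Real.sqrt (1 - ε ^ 2 * ∑ i, v i ^ 2))⁻¹

/-- `|b|² = ε²Γ⁻²|H|² + ε⁴(v·H)²`, the Minkowski norm squared of the magnetic field
`d`-vector. -/
noncomputable def bsq (d : ℕ) (ε : ℝ) (v H : Fin d → ℝ) : ℝ :=
  ε ^ 2 * (lorentz d ε v)⁻¹ ^ 2 * (∑ i, H i ^ 2) + ε ^ 4 * (∑ i, v i * H i) ^ 2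

/-- `M₀ = Γ⁻¹(I_d + ε²Γ² v⊗v)`. -/
noncomputable def M0rel (d : ℕ) (ε : ℝ) (v : Fin d → ℝ) : Matrix (Fin d) (Fin d) ℝ :=
  (lorentz d ε v)⁻¹ • ((1 : Matrix (Fin d) (Fin d) ℝ)
    + (ε ^ 2 * lorentz d ε v ^ 2) • vecMulVec v v)

/-- `𝒜₀`, the velocity block of the relativistic MHD symmetrizer `B₀(V)`. -/
noncomputable def calA0 (d : ℕ) (ε ρ h : ℝ) (v H : Fin d → ℝ) :
    Matrix (Fin d) (Fin d) ℝ :=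
  (ρ * h * lorentz d ε v + ε ^ 2 * (lorentz d ε v)⁻¹ * ∑ i, H i ^ 2) •
      ((1 : Matrix (Fin d) (Fin d) ℝ) - ε ^ 2 • vecMulVec v v)
    - (ε ^ 2 * (lorentz d ε v)⁻¹ * bsq d ε v H) • vecMulVec v v
    - (ε ^ 2 * (lorentz d ε v)⁻¹) • vecMulVec H H
    + (ε ^ 4 * (lorentz d ε v)⁻¹ * ∑ i, v i * H i) • (vecMulVec H v + vecMulVec v H)

/-- `𝒜ᵢ`, the velocity block of `Bᵢ(V)`, `i = 1, …, d`. -/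
noncomputable def calAi (d : ℕ) (ε ρ h : ℝ) (v H : Fin d → ℝ) (i : Fin d) :
    Matrix (Fin d) (Fin d) ℝ :=
  v i • ((ρ * h * lorentz d ε v + ε ^ 2 * (lorentz d ε v)⁻¹ * ∑ j, H j ^ 2) •
        ((1 : Matrix (Fin d) (Fin d) ℝ) - ε ^ 2 • vecMulVec v v)
      + (ε ^ 2 * (lorentz d ε v)⁻¹) • (bsq d ε v H • vecMulVec v v - vecMulVec H H))
    + (ε ^ 2 * (lorentz d ε v)⁻¹ * H i) •
        (((lorentz d ε v)⁻¹ ^ 2) • (vecMulVec H v + vecMulVec v H)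
          - (2 * ∑ j, v j * H j) •
              ((1 : Matrix (Fin d) (Fin d) ℝ) - ε ^ 2 • vecMulVec v v))
    + (lorentz d ε v)⁻¹ •
        vecMulVec ((ε ^ 2 * ∑ j, v j * H j) • H - bsq d ε v H • v) (Pi.single i 1)
    + (lorentz d ε v)⁻¹ •
        vecMulVec (Pi.single i 1) ((ε ^ 2 * ∑ j, v j * H j) • H - bsq d ε v H • v)

/-- `𝒩ᵢ = (Γ⁻²H + ε²(v·H)v)⊗(eᵢ − ε²vᵢv) − Γ⁻²Hᵢ I_d`. -/
noncomputable def calNi (d : ℕ) (ε : ℝ) (v H : Fin d → ℝ) (i : Fin d) :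
    Matrix (Fin d) (Fin d) ℝ :=
  vecMulVec (((lorentz d ε v)⁻¹ ^ 2) • H + (ε ^ 2 * ∑ j, v j * H j) • v)
      (Pi.single i 1 - (ε ^ 2 * v i) • v)
    - ((lorentz d ε v)⁻¹ ^ 2 * H i) • (1 : Matrix (Fin d) (Fin d) ℝ)

/-- Index type for the `(2d+2) × (2d+2)` matrices of the symmetrized ideal relativistic MHD
system, blocks of sizes `1, d, d, 1`. -/
abbrev RMHDIdx (d : ℕ) := Unit ⊕ Fin d ⊕ Fin d ⊕ Unit

/-- The symmetrizer `B₀(V)` of ideal relativistic MHD. -/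
noncomputable def B0mat (d : ℕ) (ε ρ h a : ℝ) (v H : Fin d → ℝ) :
    Matrix (RMHDIdx d) (RMHDIdx d) ℝ :=
  Matrix.of fun p q =>
    match p, q with
    | Sum.inl _, Sum.inl _ => lorentz d ε v / (ρ * a ^ 2)
    | Sum.inl _, Sum.inr (Sum.inl j) => ε ^ 2 * v j
    | Sum.inr (Sum.inl i), Sum.inl _ => ε ^ 2 * v i
    | Sum.inr (Sum.inl i), Sum.inr (Sum.inl j) => calA0 d ε ρ h v H i j
    | Sum.inr (Sum.inr (Sum.inl i)), Sum.inr (Sum.inr (Sum.inl j)) => M0rel d ε v i j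
    | Sum.inr (Sum.inr (Sum.inr _)), Sum.inr (Sum.inr (Sum.inr _)) => 1
    | _, _ => 0

/-- The matrices `Bᵢ(V)`, `i = 1, …, d`, of the symmetrized ideal relativistic MHD system. -/
noncomputable def Bimat (d : ℕ) (ε ρ h a : ℝ) (v H : Fin d → ℝ) (i : Fin d) :
    Matrix (RMHDIdx d) (RMHDIdx d) ℝ :=
  Matrix.of fun p q =>
    match p, q with
    | Sum.inl _, Sum.inl _ => lorentz d ε v * v i / (ρ * a ^ 2)
    | Sum.inl _, Sum.inr (Sum.inl j) => if i = j then 1 else 0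
    | Sum.inr (Sum.inl j), Sum.inl _ => if i = j then 1 else 0
    | Sum.inr (Sum.inl j), Sum.inr (Sum.inl k) => calAi d ε ρ h v H i j k
    | Sum.inr (Sum.inl j), Sum.inr (Sum.inr (Sum.inl k)) => calNi d ε v H i k j
    | Sum.inr (Sum.inr (Sum.inl j)), Sum.inr (Sum.inl k) => calNi d ε v H i j k
    | Sum.inr (Sum.inr (Sum.inl j)), Sum.inr (Sum.inr (Sum.inl k)) => v i * M0rel d ε v j k
    | Sum.inr (Sum.inr (Sum.inr _)), Sum.inr (Sum.inr (Sum.inr _)) => v i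
    | _, _ => 0

/-- The Jacobian `𝐉 = ∂V/∂U` of the change of unknowns `U = (q, v, H, S) ↦ V = (p, w, H, S)`
in ideal relativistic MHD, with `𝐚 = ε²(|H|²v − (v·H)H)` and `𝐛 = Γ⁻²H + ε²(v·H)v`. -/
noncomputable def Jac (d : ℕ) (ε : ℝ) (v H : Fin d → ℝ) :
    Matrix (RMHDIdx d) (RMHDIdx d) ℝ :=
  Matrix.of fun p q =>
    match p, q with
    | Sum.inl _, Sum.inl _ => 1
    | Sum.inl _, Sum.inr (Sum.inl j) =>
        ε ^ 2 * ((∑ k, H k ^ 2) * v j - (∑ k, v k * H k) * H j)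
    | Sum.inl _, Sum.inr (Sum.inr (Sum.inl j)) =>
        -((lorentz d ε v)⁻¹ ^ 2 * H j + ε ^ 2 * (∑ k, v k * H k) * v j)
    | Sum.inr (Sum.inl i), Sum.inr (Sum.inl j) => lorentz d ε v ^ 2 * M0rel d ε v i j
    | Sum.inr (Sum.inr (Sum.inl i)), Sum.inr (Sum.inr (Sum.inl j)) => if i = j then 1 else 0
    | Sum.inr (Sum.inr (Sum.inr _)), Sum.inr (Sum.inr (Sum.inr _)) => 1
    | _, _ => 0

/-- The matrix `𝒜₀ − ε⁴(ρa²/Γ) v⊗v` is (symmetric) positive definite under the subluminal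
sound speed condition `ε²a² < h`. -/

lemma dot_vmv {d : ℕ} (a b x : Fin d → ℝ) :
    x ⬝ᵥ ((vecMulVec a b) *ᵥ x) = (a ⬝ᵥ x) * (b ⬝ᵥ x) := by
  simp only [dotProduct, mulVec, vecMulVec_apply, Finset.mul_sum, Finset.sum_mul]
  rw [Finset.sum_comm]
  exact Finset.sum_congr rfl fun i _ => Finset.sum_congr rfl fun j _ => by ring

set_option maxHeartbeats 1000000 in
theorem stmt11 (d : ℕ) (hd : d = 2 ∨ d = 3) (ρ h a ε : ℝ)
    (hρ : 0 < ρ) (hh : 0 < h) (ha : 0 < a) (hε : 0 < ε) (hsub : ε ^ 2 * a ^ 2 < h)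
    (v H : Fin d → ℝ) (hv : ε ^ 2 * ∑ i, v i ^ 2 < 1) :
    (calA0 d ε ρ h v H
      - (ε ^ 4 * (ρ * a ^ 2 / lorentz d ε v)) • vecMulVec v v).PosDef := by
  classical
  have hD : 0 < 1 - ε ^ 2 * ∑ i, v i ^ 2 := by linarith
  set g : ℝ := Real.sqrt (1 - ε ^ 2 * ∑ i, v i ^ 2) with hgdef
  have hg : 0 < g := Real.sqrt_pos.2 hD
  have hg2 : g ^ 2 = 1 - ε ^ 2 * ∑ i, v i ^ 2 := Real.sq_sqrt hD.le
  have hlor : lorentz d ε v = g⁻¹ := rfl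
  have hlorinv : (lorentz d ε v)⁻¹ = g := by rw [hlor, inv_inv]
  rw [posDef_iff_dotProduct_mulVec]
  constructor
  · show _ = _
    ext i j
    simp only [conjTranspose_apply, star_trivial, calA0, Matrix.sub_apply, Matrix.add_apply,
      Matrix.smul_apply, vecMulVec_apply, Matrix.one_apply, smul_eq_mul]
    rcases eq_or_ne i j with rfl | hij
    · ring
    · simp only [hij, Ne.symm hij, if_false]
      ring
  · intro x hx
    have hX : 0 < x ⬝ᵥ x := by
      obtain ⟨i, hi⟩ := Function.ne_iff.1 hx
      exact Finset.sum_pos' (fun j _ => mul_self_nonneg _)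
        ⟨i, Finset.mem_univ i, mul_self_pos.2 hi⟩
    set S : ℝ := v ⬝ᵥ x with hS
    set T0 : ℝ := H ⬝ᵥ x with hT0
    set X : ℝ := x ⬝ᵥ x with hXdef
    have eV : (∑ i, v i ^ 2) = v ⬝ᵥ v := by simp [dotProduct, sq]
    have eH : (∑ i, H i ^ 2) = H ⬝ᵥ H := by simp [dotProduct, sq]
    have eVH : (∑ i, v i * H i) = v ⬝ᵥ H := by simp [dotProduct]
    set V : ℝ := v ⬝ᵥ v with hV
    set Hn : ℝ := H ⬝ᵥ H with hHn
    set VH : ℝ := v ⬝ᵥ H with hVH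
    have hVnn : 0 ≤ V := by
      rw [← eV]; positivity
    have hHnn : 0 ≤ Hn := by
      rw [← eH]; positivity
    have hv' : ε ^ 2 * V < 1 := by rw [← eV]; exact hv
    have hg2' : g ^ 2 = 1 - ε ^ 2 * V := by rw [hg2, eV]
    -- Cauchy-Schwarz: S^2 ≤ V * X
    have hS2 : S ^ 2 ≤ V * X := by
      have := Finset.sum_mul_sq_le_sq_mul_sq Finset.univ v x
      simpa [hS, hV, hXdef, dotProduct, sq] using this
    -- the vector y = x - ε² S v
    set y : Fin d → ℝ := x - (ε ^ 2 * S) • v with hy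
    set Y : ℝ := y ⬝ᵥ y with hYdef
    set T : ℝ := H ⬝ᵥ y with hTdef
    have hYnn : 0 ≤ Y := by
      rw [hYdef, dotProduct]
      exact Finset.sum_nonneg fun i _ => mul_self_nonneg _
    have hYeq : Y = X - ε ^ 2 * S ^ 2 * (2 - ε ^ 2 * V) := by
      rw [hYdef, hy]
      simp only [dotProduct_sub, sub_dotProduct, dotProduct_smul, smul_dotProduct,
        smul_eq_mul]
      rw [dotProduct_comm x v, ← hS, ← hXdef, ← hV]
      ring
    have hTeq : T = T0 - ε ^ 2 * VH * S := by
      rw [hTdef, hy]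
      simp only [dotProduct_sub, dotProduct_smul, smul_eq_mul]
      rw [dotProduct_comm H v, ← hT0, ← hVH]
      ring
    have hCS : T ^ 2 ≤ Hn * Y := by
      have := Finset.sum_mul_sq_le_sq_mul_sq Finset.univ H y
      have e1 : T = ∑ i, H i * y i := by rw [hTdef]; rfl
      have e2 : Y = ∑ i, y i ^ 2 := by rw [hYdef]; simp [dotProduct, sq]
      have e3 : Hn = ∑ i, H i ^ 2 := by rw [hHn]; simp [dotProduct, sq]
      rw [e1, e2, e3]; exact this
    -- expand the quadratic form
    have expand : star x ⬝ᵥ ((calA0 d ε ρ h v H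
        - (ε ^ 4 * (ρ * a ^ 2 / lorentz d ε v)) • vecMulVec v v) *ᵥ x)
        = ρ * h * g⁻¹ * (X - ε ^ 2 * S ^ 2) - ε ^ 4 * ρ * a ^ 2 * g * S ^ 2
          + ε ^ 2 * g * (Hn * Y - T ^ 2) := by
      rw [hYeq, hTeq]
      simp only [star_trivial, calA0, bsq, hlorinv, hlor, div_eq_mul_inv, inv_inv,
        Matrix.sub_mulVec, Matrix.add_mulVec, Matrix.smul_mulVec, Matrix.one_mulVec,
        dotProduct_sub, dotProduct_add, dotProduct_smul, smul_eq_mul, dot_vmv,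
        eV, eH, eVH, ← hS, ← hT0, ← hXdef, ← hV, ← hHn, ← hVH]
      rw [hg2']
      ring
    clear_value g S T0 X V Hn VH y Y T
    rw [expand]
    have h1 : 0 ≤ ε ^ 2 * g * (Hn * Y - T ^ 2) :=
      mul_nonneg (by positivity) (sub_nonneg.2 hCS)
    have h2 : g * X ≤ g⁻¹ * (X - ε ^ 2 * S ^ 2) := by
      have hle : g ^ 2 * X ≤ X - ε ^ 2 * S ^ 2 := by nlinarith
      calc g * X = g⁻¹ * (g ^ 2 * X) := by
            rw [pow_two, mul_assoc g g X, ← mul_assoc, inv_mul_cancel₀ hg.ne', one_mul]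
        _ ≤ g⁻¹ * (X - ε ^ 2 * S ^ 2) :=
          mul_le_mul_of_nonneg_left hle (inv_nonneg.2 hg.le)
    have h3 : ε ^ 4 * a ^ 2 * S ^ 2 ≤ ε ^ 2 * a ^ 2 * X := by
      nlinarith [mul_le_mul_of_nonneg_left hS2 (show (0:ℝ) ≤ ε ^ 4 * a ^ 2 by positivity),
        mul_le_mul_of_nonneg_left hv'.le (show (0:ℝ) ≤ ε ^ 2 * a ^ 2 * X by positivity)]
    have h4 : 0 < ρ * g * X * (h - ε ^ 2 * a ^ 2) := by
      have : 0 < h - ε ^ 2 * a ^ 2 := by linarith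
      positivity
    nlinarith [mul_le_mul_of_nonneg_left h2 (show (0:ℝ) ≤ ρ * h by positivity),
      mul_le_mul_of_nonneg_left h3 (show (0:ℝ) ≤ ρ * g by positivity)]
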